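/- Let Ξ_1,...,Ξ_K ∈ ℝ^K be unit vectors with pairwise inner products cos μ (cos μ ≠ −1/(K−1), cos μ ≠ 1), let w = 0, and let Ξ* = (1/K)∑ Ξ_i. Then softmax(βΞΞ*)_i = 1/K for all i, and the maximum of vᵀΞᵀ(D_s − s⊗s)Ξ v over unit vectors v ∈ ℝ^K equals (1 − cos μ)/K; consequently the Hessian D²V(Ξ*) = I − βΞᵀ(D_s − s⊗s)Ξ is positive definite whenever β(1 − cos μ) < K. -/

import Mathlib

open Matrix

/-- `softmax(z)_i = e^{z_i} / ∑_k e^{z_k}`. -/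
noncomputable def softmax {ι : Type*} [Fintype ι] (z : ι → ℝ) : ι → ℝ :=
  fun i => Real.exp (z i) / ∑ k, Real.exp (z k)

/-- for `K` equiangular unit patterns, `w = 0` and `Ξ* = (1/K)∑ Ξ_i`:
the softmax at `Ξ*` is uniform, the maximum of the Rayleigh quotient
`vᵀΞᵀ(D_s − s⊗s)Ξv` over unit vectors equals `(1 − cos μ)/K`, and hence the Hessian
`I − βΞᵀ(D_s − s⊗s)Ξ` is positive definite whenever `β(1 − cos μ) < K`. -/
theorem equiangular_progenitor_stability {K : ℕ} (hK : 2 ≤ K)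
    (Ξ : Matrix (Fin K) (Fin K) ℝ) (β : ℝ) (hβ : 0 < β)
    (hnorm : ∀ i, ∑ l, Ξ i l ^ 2 = 1) (μ : ℝ) (hμ : 0 < μ)
    (hangle : ∀ i j, i ≠ j → ∑ l, Ξ i l * Ξ j l = Real.cos μ)
    (h1 : Real.cos μ ≠ -1 / ((K : ℝ) - 1)) (h2 : Real.cos μ ≠ 1)
    (Ξstar : Fin K → ℝ) (hstar : Ξstar = fun l => (∑ i, Ξ i l) / K)
    (s : Fin K → ℝ) (hs : s = softmax (fun i => β * ∑ l, Ξ i l * Ξstar l))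
    (J : Matrix (Fin K) (Fin K) ℝ)
    (hJ : J = Matrix.diagonal s - Matrix.vecMulVec s s) :
    (∀ i, s i = 1 / K) ∧
    IsGreatest {c : ℝ | ∃ v : Fin K → ℝ, (∑ l, v l ^ 2) = 1 ∧
        c = v ⬝ᵥ (Ξᵀ * J * Ξ).mulVec v} ((1 - Real.cos μ) / K) ∧
    (β * (1 - Real.cos μ) < K →
      ((1 : Matrix (Fin K) (Fin K) ℝ) - β • (Ξᵀ * J * Ξ)).PosDef) := by
  have hK0 : (0:ℝ) < K := by positivity
  have hKne : (K:ℝ) ≠ 0 := ne_of_gt hK0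
  set c := Real.cos μ with hc
  have hclt : c < 1 := lt_of_le_of_ne (Real.cos_le_one μ) h2
  have h1c : (0:ℝ) < 1 - c := by linarith
  have hdot : ∀ i j, ∑ l, Ξ i l * Ξ j l = if i = j then 1 else c := by
    intro i j
    by_cases h : i = j
    · subst h; simp only [if_pos rfl]; simpa [sq] using hnorm i
    · rw [if_neg h]; exact hangle i j h
  have hsumif : ∀ i : Fin K, (∑ j : Fin K, if i = j then (1:ℝ) else c) = 1 + ((K:ℝ)-1)*c := by
    intro i
    have : ∀ j : Fin K, (if i = j then (1:ℝ) else c) = c + (if i = j then 1-c else 0) := by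
      intro j; by_cases h : i = j <;> simp [h]
    simp only [this, Finset.sum_add_distrib, Finset.sum_const, Finset.card_univ,
      Fintype.card_fin, Finset.sum_ite_eq, Finset.mem_univ, if_pos, nsmul_eq_mul]
    ring
  have hrs : ∀ i, ∑ l, Ξ i l * Ξstar l = (1 + ((K:ℝ)-1)*c)/K := by
    intro i
    rw [hstar]
    have h1l : ∀ l, Ξ i l * ((∑ j, Ξ j l) / K) = (∑ j, Ξ i l * Ξ j l)/K := by
      intro l; rw [mul_div_assoc', Finset.mul_sum]
    simp only [h1l]
    rw [← Finset.sum_div, Finset.sum_comm]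
    congr 1
    simp only [hdot]
    exact hsumif i
  have hss : ∑ l, Ξstar l * Ξstar l = (1 + ((K:ℝ)-1)*c)/K := by
    have key : ∑ i, (∑ l, Ξ i l * Ξstar l) = K * ∑ l, Ξstar l * Ξstar l := by
      rw [Finset.sum_comm, Finset.mul_sum]
      refine Finset.sum_congr rfl fun l _ => ?_
      rw [← Finset.sum_mul, hstar]
      field_simp
      try ring
    simp only [hrs, Finset.sum_const, Finset.card_univ, Fintype.card_fin, nsmul_eq_mul] at key
    field_simp at key ⊢
    linarith [key]
  -- softmax uniform
  have hsu : ∀ i, s i = 1/K := by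
    intro i
    rw [hs]
    unfold softmax
    simp only [hrs]
    rw [Finset.sum_const, Finset.card_univ, Fintype.card_fin, nsmul_eq_mul]
    rw [div_eq_div_iff (by positivity) (by positivity)]
    ring
  -- quadratic form formula (uncentered)
  have hquad : ∀ x : Fin K → ℝ, x ⬝ᵥ (Ξᵀ * J * Ξ) *ᵥ x =
      (∑ i, ((Ξ *ᵥ x) i)^2)/K - (∑ i, (Ξ *ᵥ x) i)^2/(K:ℝ)^2 := by
    intro x
    have e1 : x ⬝ᵥ (Ξᵀ * J * Ξ) *ᵥ x = (Ξ *ᵥ x) ⬝ᵥ (J *ᵥ (Ξ *ᵥ x)) := by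
      rw [← Matrix.mulVec_mulVec, ← Matrix.mulVec_mulVec, Matrix.dotProduct_mulVec,
        Matrix.vecMul_transpose]
    rw [e1, hJ, Matrix.sub_mulVec, dotProduct_sub]
    set w := Ξ *ᵥ x with hw
    have e2 : w ⬝ᵥ (Matrix.diagonal s *ᵥ w) = (∑ i, w i ^2)/K := by
      simp only [dotProduct, Matrix.mulVec_diagonal, hsu, Finset.sum_div]
      refine Finset.sum_congr rfl fun i _ => ?_; ring
    have e3 : w ⬝ᵥ (Matrix.vecMulVec s s *ᵥ w) = (∑ i, w i)^2/(K:ℝ)^2 := by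
      have hv : Matrix.vecMulVec s s *ᵥ w = fun _ => (∑ j, w j)/(K:ℝ)^2 := by
        funext i
        simp only [Matrix.mulVec, dotProduct, Matrix.vecMulVec_apply, hsu,
          Finset.sum_div]
        refine Finset.sum_congr rfl fun j _ => ?_; ring
      rw [hv]
      simp only [dotProduct]
      rw [← Finset.sum_mul]  -- maybe not; handle below
      ring
    rw [e2, e3]
  -- centered form
  have hquad2 : ∀ x : Fin K → ℝ, x ⬝ᵥ (Ξᵀ * J * Ξ) *ᵥ x
      = (∑ i, (∑ l, (Ξ i l - Ξstar l) * x l)^2)/K := by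
    intro x
    rw [hquad x]
    set T := ∑ l, Ξstar l * x l with hT
    have hwsum : ∑ i, (Ξ *ᵥ x) i = K * T := by
      simp only [Matrix.mulVec, dotProduct]
      rw [Finset.sum_comm, hT, Finset.mul_sum]
      refine Finset.sum_congr rfl fun l _ => ?_
      rw [← Finset.sum_mul, hstar]
      field_simp
      try ring
    have hp : ∀ i, (∑ l, (Ξ i l - Ξstar l) * x l) = (Ξ *ᵥ x) i - T := by
      intro i
      simp only [sub_mul, Finset.sum_sub_distrib, Matrix.mulVec, dotProduct, hT]
    have expand : ∑ i, ((Ξ *ᵥ x) i - T)^2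
        = (∑ i, ((Ξ *ᵥ x) i)^2) - 2*T*(∑ i, (Ξ *ᵥ x) i) + K*T^2 := by
      calc ∑ i, ((Ξ *ᵥ x) i - T)^2
          = ∑ i, (((Ξ *ᵥ x) i)^2 - 2*T*((Ξ *ᵥ x) i) + T^2) :=
            Finset.sum_congr rfl (fun i _ => by ring)
        _ = (∑ i, ((Ξ *ᵥ x) i)^2) - 2*T*(∑ i, (Ξ *ᵥ x) i) + K*T^2 := by
            rw [Finset.sum_add_distrib, Finset.sum_sub_distrib, ← Finset.mul_sum,
              Finset.sum_const, Finset.card_univ, Fintype.card_fin, nsmul_eq_mul]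
    simp only [hp]
    rw [expand, hwsum]
    field_simp
    ring
  -- column sums of centered matrix vanish
  have hcol : ∀ l, ∑ i, (Ξ i l - Ξstar l) = 0 := by
    intro l
    rw [Finset.sum_sub_distrib, Finset.sum_const, Finset.card_univ, Fintype.card_fin,
      nsmul_eq_mul, hstar]
    field_simp
    simp
  -- Gram of centered rows
  have hCC : ∀ i j, ∑ l, (Ξ i l - Ξstar l) * (Ξ j l - Ξstar l)
      = (1-c) * ((if i = j then 1 else 0) - 1/K) := by
    intro i j
    have e : ∀ l, (Ξ i l - Ξstar l) * (Ξ j l - Ξstar l)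
        = Ξ i l * Ξ j l - Ξ i l * Ξstar l - Ξstar l * Ξ j l + Ξstar l * Ξstar l :=
      fun l => by ring
    have h' : ∑ l, Ξstar l * Ξ j l = (1 + ((K:ℝ)-1)*c)/K := by
      rw [← hrs j]; exact Finset.sum_congr rfl fun l _ => mul_comm _ _
    simp only [e, Finset.sum_add_distrib, Finset.sum_sub_distrib, hdot, hrs, h', hss]
    by_cases h : i = j <;> simp only [h, if_pos, if_neg, if_true, if_false] <;> field_simp <;> ring
  -- homogeneous upper bound
  have hub : ∀ x : Fin K → ℝ,
      (∑ i, (∑ l, (Ξ i l - Ξstar l) * x l)^2) ≤ (1-c) * ∑ l, x l^2 := by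
    intro x
    have hqnn : (0:ℝ) ≤ ∑ i, (∑ l, (Ξ i l - Ξstar l) * x l)^2 :=
      Finset.sum_nonneg fun i _ => sq_nonneg _
    have hxnn : (0:ℝ) ≤ ∑ l, x l^2 := Finset.sum_nonneg fun l _ => sq_nonneg _
    set p : Fin K → ℝ := fun i => ∑ l, (Ξ i l - Ξstar l) * x l with hpdef
    show ∑ i, p i ^2 ≤ (1-c) * ∑ l, x l^2
    set q := ∑ i, p i ^2 with hq
    have hpsum : ∑ i, p i = 0 := by
      simp only [hpdef]
      rw [Finset.sum_comm]
      rw [Finset.sum_congr rfl (fun l _ => by rw [← Finset.sum_mul, hcol l, zero_mul])]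
      exact Finset.sum_const_zero
    have htx : ∑ l, (∑ i, (Ξ i l - Ξstar l) * p i) * x l = q := by
      calc ∑ l, (∑ i, (Ξ i l - Ξstar l) * p i) * x l
          = ∑ l, ∑ i, ((Ξ i l - Ξstar l) * x l) * p i := by
            refine Finset.sum_congr rfl fun l _ => ?_
            rw [Finset.sum_mul]
            exact Finset.sum_congr rfl fun i _ => by ring
        _ = ∑ i, ∑ l, ((Ξ i l - Ξstar l) * x l) * p i := Finset.sum_comm
        _ = ∑ i, p i * p i := by
            refine Finset.sum_congr rfl fun i _ => ?_
            rw [← Finset.sum_mul]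
        _ = ∑ i, p i ^ 2 := Finset.sum_congr rfl fun i _ => (pow_two (p i)).symm
        _ = q := hq.symm
    have ht2 : ∑ l, (∑ i, (Ξ i l - Ξstar l) * p i)^2 = (1-c) * q := by
      have e1 : ∀ l, (∑ i, (Ξ i l - Ξstar l) * p i)^2
          = ∑ i, ∑ j, (p i * p j) * ((Ξ i l - Ξstar l) * (Ξ j l - Ξstar l)) := by
        intro l
        rw [sq, Finset.sum_mul_sum]
        exact Finset.sum_congr rfl fun i _ =>
          Finset.sum_congr rfl fun j _ => by ring
      calc ∑ l, (∑ i, (Ξ i l - Ξstar l) * p i)^2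
          = ∑ i, ∑ l, ∑ j, (p i * p j) * ((Ξ i l - Ξstar l) * (Ξ j l - Ξstar l)) := by
            rw [← Finset.sum_comm]
            exact Finset.sum_congr rfl fun l _ => e1 l
        _ = ∑ i, ∑ j, (p i * p j) * (∑ l, (Ξ i l - Ξstar l) * (Ξ j l - Ξstar l)) := by
            refine Finset.sum_congr rfl fun i _ => ?_
            rw [Finset.sum_comm]
            exact Finset.sum_congr rfl fun j _ => (Finset.mul_sum _ _ _).symm
        _ = ∑ i, ∑ j, ((1-c) * (if i = j then p i * p j else 0)
              - (1-c)/K * (p i * p j)) := by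
            refine Finset.sum_congr rfl fun i _ => Finset.sum_congr rfl fun j _ => ?_
            rw [hCC i j]
            by_cases h : i = j <;> simp [h] <;> ring
        _ = (1-c) * q := by
            have hA : ∑ i, ∑ j, (1-c) * (if i = j then p i * p j else 0) = (1-c) * q := by
              have eA : ∀ i : Fin K, ∑ j, (1-c) * (if i = j then p i * p j else 0)
                  = (1-c) * (p i)^2 := by
                intro i
                rw [← Finset.mul_sum, Finset.sum_ite_eq, if_pos (Finset.mem_univ i), ← sq]
              rw [Finset.sum_congr rfl fun i _ => eA i, ← Finset.mul_sum, hq]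
            have hB : ∑ i, ∑ j, (1-c)/(K:ℝ) * (p i * p j) = 0 := by
              have eB : ∀ i : Fin K, ∀ j : Fin K,
                  (1-c)/(K:ℝ) * (p i * p j) = ((1-c)/(K:ℝ) * p i) * p j := fun i j => by ring
              calc ∑ i, ∑ j, (1-c)/(K:ℝ) * (p i * p j)
                  = ∑ i, ((1-c)/(K:ℝ) * p i) * (∑ j, p j) := by
                    refine Finset.sum_congr rfl fun i _ => ?_
                    simp only [eB]
                    exact (Finset.mul_sum _ _ _).symm
                _ = 0 := by simp [hpsum]
            simp only [Finset.sum_sub_distrib]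
            rw [hA, hB, sub_zero]
    have cs := Finset.sum_mul_sq_le_sq_mul_sq Finset.univ
      (fun l => ∑ i, (Ξ i l - Ξstar l) * p i) x
    rw [htx] at cs
    rw [ht2] at cs
    rcases eq_or_lt_of_le hqnn with h|h
    · rw [← h]; positivity
    · nlinarith
  have hsr : ∀ j, ∑ l, Ξstar l * Ξ j l = (1 + ((K:ℝ)-1)*c)/K := by
    intro j
    rw [← hrs j]
    exact Finset.sum_congr rfl fun l _ => mul_comm _ _
  -- the maximizing vector
  have hr2 : Real.sqrt (2*(1-c)) ^ 2 = 2*(1-c) := Real.sq_sqrt (by linarith)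
  have hrpos : (0:ℝ) < Real.sqrt (2*(1-c)) := Real.sqrt_pos.mpr (by linarith)
  set r := Real.sqrt (2*(1-c)) with hrdef
  have hrne : r ≠ 0 := ne_of_gt hrpos
  obtain ⟨i0, i1, hne⟩ : ∃ i0 i1 : Fin K, i0 ≠ i1 :=
    ⟨⟨0, by omega⟩, ⟨1, by omega⟩, by simp [Fin.ext_iff]⟩
  set v : Fin K → ℝ := fun l => (Ξ i0 l - Ξ i1 l)/r with hvdef
  have hvnorm : ∑ l, v l ^ 2 = 1 := by
    have e : ∀ l, v l ^2 = ((Ξ i0 l)^2 - 2*(Ξ i0 l * Ξ i1 l) + (Ξ i1 l)^2)/r^2 := by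
      intro l; simp only [hvdef]; field_simp; ring
    simp only [e]
    rw [← Finset.sum_div, Finset.sum_add_distrib, Finset.sum_sub_distrib, ← Finset.mul_sum,
      hnorm, hnorm, hdot, if_neg hne, hr2]
    field_simp; ring
  have hpv : ∀ i, ∑ l, (Ξ i l - Ξstar l) * v l
      = ((if i = i0 then (1:ℝ) else c) - (if i = i1 then (1:ℝ) else c))/r := by
    intro i
    have e : ∀ l, (Ξ i l - Ξstar l) * v l
        = (Ξ i l * Ξ i0 l - Ξ i l * Ξ i1 l - (Ξstar l * Ξ i0 l - Ξstar l * Ξ i1 l))/r := by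
      intro l; simp only [hvdef]; field_simp
    simp only [e]
    rw [← Finset.sum_div]
    congr 1
    simp only [Finset.sum_sub_distrib, hdot, hsr]
    ring
  have hpvsum : ∑ i, (∑ l, (Ξ i l - Ξstar l) * v l)^2 = 1 - c := by
    have e : ∀ i, (∑ l, (Ξ i l - Ξstar l) * v l)^2
        = ((1-c)^2*(if i = i0 then (1:ℝ) else 0) + (1-c)^2*(if i = i1 then (1:ℝ) else 0))/r^2 := by
      intro i
      rw [hpv i]
      by_cases h0 : i = i0
      · have h1' : i ≠ i1 := h0 ▸ hne
        simp only [h0, if_pos, if_neg hne, if_neg (h0 ▸ h1'), if_true]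
        rw [div_pow]; ring_nf
      · by_cases h1 : i = i1
        · simp only [if_neg h0, h1, if_pos, if_neg (Ne.symm hne), if_true]
          rw [div_pow]; ring_nf
        · simp [if_neg h0, if_neg h1]
    simp only [e]
    rw [← Finset.sum_div, Finset.sum_add_distrib, ← Finset.mul_sum, ← Finset.mul_sum]
    simp only [Finset.sum_ite_eq', Finset.mem_univ, if_pos, if_true]
    rw [hr2]
    field_simp; ring
  refine ⟨hsu, ⟨⟨v, hvnorm, ?_⟩, ?_⟩, ?_⟩
  · rw [hquad2 v, hpvsum]
  · rintro y ⟨u, hu1, rfl⟩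
    rw [hquad2 u]
    have := hub u
    rw [hu1, mul_one] at this
    gcongr
  · intro hβK
    have hJh : Jᵀ = J := by
      rw [hJ]; ext i j
      by_cases h : i = j
      · subst h; simp
      · simp [Matrix.diagonal, Matrix.vecMulVec_apply, h, Ne.symm h, mul_comm]
    have hMh : (Ξᵀ * J * Ξ)ᵀ = Ξᵀ * J * Ξ := by
      rw [Matrix.transpose_mul, Matrix.transpose_mul, Matrix.transpose_transpose, hJh,
        Matrix.mul_assoc]
    rw [Matrix.posDef_iff_dotProduct_mulVec]
    constructor
    · show ((1 : Matrix (Fin K) (Fin K) ℝ) - β • (Ξᵀ * J * Ξ))ᴴ = _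
      rw [Matrix.conjTranspose_eq_transpose_of_trivial, Matrix.transpose_sub,
        Matrix.transpose_one, Matrix.transpose_smul, hMh]
    · intro x hx
      have hxs : (0:ℝ) < ∑ l, x l^2 := by
        obtain ⟨l, hl⟩ := Function.ne_iff.mp hx
        have h1' : x l ^2 ≤ ∑ l, x l^2 :=
          Finset.single_le_sum (fun i _ => sq_nonneg (x i)) (Finset.mem_univ l)
        have h2' : 0 < x l^2 := (sq_nonneg (x l)).lt_of_ne (Ne.symm (pow_ne_zero 2 hl))
        linarith
      have hform : x ⬝ᵥ (((1 : Matrix (Fin K) (Fin K) ℝ) - β • (Ξᵀ * J * Ξ)) *ᵥ x)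
          = (∑ l, x l^2) - β * (x ⬝ᵥ (Ξᵀ * J * Ξ) *ᵥ x) := by
        rw [Matrix.sub_mulVec, dotProduct_sub, Matrix.one_mulVec,
          Matrix.smul_mulVec, dotProduct_smul, smul_eq_mul]
        congr 1
        simp only [dotProduct]
        exact Finset.sum_congr rfl fun l _ => (pow_two (x l)).symm
      have hstarx : star x = x := by
        funext l; simp
      have hP := hub x
      rw [hstarx, hform, hquad2 x, sub_pos, ← mul_div_assoc, div_lt_iff₀ hK0]
      nlinarith [mul_le_mul_of_nonneg_left hP hβ.le,
        mul_pos (show (0:ℝ) < (K:ℝ) - β*(1-c) by linarith) hxs]
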